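/- Let m ≥ 0 be an integer and let a_0, …, a_m be positive real numbers satisfying a Diophantine bound with constants C > 0 and ν ≥ 1. Then there exists c > 0 such that for every ε > 0, every real T ≥ 1 and every z ∈ ℂ^{m+1}: if there exists t ∈ [1, T] with ‖φ_t(z) − z‖ ≤ ε (Euclidean norm on ℂ^{m+1}), then min_{0≤j≤m} |z_j| ≤ c · ε · T^{ν−1}. In other words, the recurrence set {z : ∃ t ∈ [1,T], ‖φ_t(z) − z‖ ≤ ε} is contained in {z : min_j |z_j| ≤ c ε T^{ν−1}}. -/

import Mathlib

open scoped Real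

/-- The set of integer lattice points in Euclidean space `ℝ^{m+1}`. -/
def intLattice (m : ℕ) : Set (EuclideanSpace ℝ (Fin (m + 1))) :=
  {w | ∀ j, ∃ n : ℤ, w j = (n : ℝ)}

/-- The linear flow `φ_t(z)_j = e^{i a_j t} z_j` on `ℂ^{m+1}`. -/
noncomputable def linFlow (m : ℕ) (a : Fin (m + 1) → ℝ) (t : ℝ)
    (z : EuclideanSpace ℂ (Fin (m + 1))) : EuclideanSpace ℂ (Fin (m + 1)) :=
  WithLp.toLp 2 (fun j => Complex.exp (Complex.I * (a j : ℂ) * (t : ℂ)) * z j)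

lemma abs_exp_I_sub_one (θ : ℝ) :
    ‖Complex.exp ((θ : ℂ) * Complex.I) - 1‖ = 2 * |Real.sin (θ / 2)| := by
  rw [Complex.exp_mul_I]
  have h1 : (Complex.cos θ + Complex.sin θ * Complex.I - 1)
      = Complex.ofReal (Real.cos θ - 1) + Complex.ofReal (Real.sin θ) * Complex.I := by
    push_cast
    ring
  rw [h1, Complex.norm_def, Complex.normSq_add_mul_I]
  have h2 : (Real.cos θ - 1) ^ 2 + Real.sin θ ^ 2 = (2 * |Real.sin (θ / 2)|) ^ 2 := by
    have hθ : θ = 2 * (θ / 2) := by ring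
    have hc : Real.cos θ = 2 * Real.cos (θ / 2) ^ 2 - 1 := by
      conv_lhs => rw [hθ]
      exact Real.cos_two_mul _
    have hs : Real.sin θ = 2 * Real.sin (θ / 2) * Real.cos (θ / 2) := by
      conv_lhs => rw [hθ]
      exact Real.sin_two_mul _
    have hsc := Real.sin_sq_add_cos_sq (θ / 2)
    rw [mul_pow, sq_abs, hc, hs]
    nlinarith
  rw [h2]
  exact Real.sqrt_sq (by positivity)

lemma round_le_two_sin (x : ℝ) : |x - round x| ≤ 2 * |Real.sin (π * x)| := by
  set n := round x
  set d := x - n with hd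
  have hdabs : |d| ≤ 1 / 2 := abs_sub_round x
  have hx : x = d + n := by rw [hd]; ring
  have hsin : |Real.sin (π * x)| = |Real.sin (π * d)| := by
    rw [hx]
    have : π * (d + n) = π * d + n * π := by ring
    rw [this, Real.sin_add, Real.sin_int_mul_pi, mul_zero, add_zero, abs_mul,
      Real.abs_cos_int_mul_pi, mul_one]
  rw [hsin]
  have h1 : |Real.sin (π * d)| = Real.sin (π * |d|) := by
    rcases abs_cases d with ⟨h, _⟩ | ⟨h, hneg⟩
    · rw [h, abs_of_nonneg]
      exact Real.sin_nonneg_of_nonneg_of_le_pi (by positivity)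
        (by nlinarith [Real.pi_pos])
    · rw [h, mul_neg, Real.sin_neg]
      rw [abs_of_nonpos]
      exact Real.sin_nonpos_of_nonpos_of_neg_pi_le
        (by nlinarith [Real.pi_pos]) (by nlinarith [Real.pi_pos])
  rw [h1]
  have h2 : 2 / π * (π * |d|) ≤ Real.sin (π * |d|) :=
    Real.mul_le_sin (by positivity) (by nlinarith [Real.pi_pos])
  have hπ : (0:ℝ) < π := Real.pi_pos
  have : 2 / π * (π * |d|) = 2 * |d| := by field_simp
  nlinarith [abs_nonneg d]

lemma coord_bound (aj t : ℝ) :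
    |t * aj / (2 * π) - round (t * aj / (2 * π))| ≤
      ‖Complex.exp (Complex.I * (aj : ℂ) * (t : ℂ)) - 1‖ := by
  have hπ : (0:ℝ) < π := Real.pi_pos
  set x := t * aj / (2 * π) with hx
  have hθ : aj * t = 2 * π * x := by rw [hx]; field_simp
  have h1 : Complex.I * (aj : ℂ) * (t : ℂ) = ((aj * t : ℝ) : ℂ) * Complex.I := by
    push_cast; ring
  rw [h1, abs_exp_I_sub_one]
  have h2 : aj * t / 2 = π * x := by rw [hθ]; ring
  rw [h2]
  exact round_le_two_sin x

theorem recurrence_set_bound (m : ℕ) (a : Fin (m + 1) → ℝ) (ha : ∀ j, 0 < a j)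
    (C ν : ℝ) (hC : 0 < C) (hν : 1 ≤ ν)
    (hdio : ∀ t : ℝ, 1 ≤ t →
      C * t ^ (1 - ν) ≤ Metric.infDist
        (show EuclideanSpace ℝ (Fin (m + 1)) from WithLp.toLp 2 (fun j => t * a j / (2 * π)))
        (intLattice m)) :
    ∃ c : ℝ, 0 < c ∧ ∀ ε : ℝ, 0 < ε → ∀ T : ℝ, 1 ≤ T →
      ∀ z : EuclideanSpace ℂ (Fin (m + 1)),
        (∃ t : ℝ, t ∈ Set.Icc 1 T ∧ ‖linFlow m a t z - z‖ ≤ ε) →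
        (Finset.univ.inf' Finset.univ_nonempty fun j => ‖z j‖) ≤
          c * ε * T ^ (ν - 1) := by
  refine ⟨1 / C, by positivity, fun ε hε T hT z ⟨t, ⟨ht1, htT⟩, hrec⟩ => ?_⟩
  set μ := Finset.univ.inf' Finset.univ_nonempty fun j => ‖z j‖ with hμ
  have hμle : ∀ j, μ ≤ ‖z j‖ := fun j =>
    Finset.inf'_le _ (Finset.mem_univ j)
  have hμ0 : 0 ≤ μ := Finset.le_inf' _ _ fun j _ => by positivity
  set v : EuclideanSpace ℝ (Fin (m + 1)) := WithLp.toLp 2 (fun j => t * a j / (2 * π)) with hv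
  set w : EuclideanSpace ℝ (Fin (m + 1)) := WithLp.toLp 2 (fun j => (round (v j) : ℝ)) with hw
  have hwmem : w ∈ intLattice m := fun j => ⟨round (v j), rfl⟩
  have hinf : Metric.infDist v (intLattice m) ≤ dist v w :=
    Metric.infDist_le_dist_of_mem hwmem
  -- key inequality: dist v w * μ ≤ ‖linFlow m a t z - z‖
  have hkey : dist v w * μ ≤ ‖linFlow m a t z - z‖ := by
    have hd : dist v w = Real.sqrt (∑ j, dist (v j) (w j) ^ 2) :=
      EuclideanSpace.dist_eq v w
    have hn : ‖linFlow m a t z - z‖ =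
        Real.sqrt (∑ j, ‖(linFlow m a t z - z) j‖ ^ 2) :=
      EuclideanSpace.norm_eq _
    rw [hd, hn]
    have : Real.sqrt (∑ j, dist (v j) (w j) ^ 2) * μ
        = Real.sqrt ((∑ j, dist (v j) (w j) ^ 2) * μ ^ 2) := by
      rw [Real.sqrt_mul (by positivity), Real.sqrt_sq hμ0]
    rw [this]
    apply Real.sqrt_le_sqrt
    rw [Finset.sum_mul]
    apply Finset.sum_le_sum
    intro j _
    have hcoord : (linFlow m a t z - z) j
        = (Complex.exp (Complex.I * (a j : ℂ) * (t : ℂ)) - 1) * z j := by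
      simp [linFlow]
      ring
    rw [hcoord]
    have hb : dist (v j) (w j) ≤
        ‖Complex.exp (Complex.I * (a j : ℂ) * (t : ℂ)) - 1‖ := by
      rw [Real.dist_eq]
      exact coord_bound (a j) t
    have : ‖(Complex.exp (Complex.I * (a j : ℂ) * (t : ℂ)) - 1) * z j‖
        = ‖Complex.exp (Complex.I * (a j : ℂ) * (t : ℂ)) - 1‖
          * ‖z j‖ := by
      exact norm_mul _ _
    rw [this, mul_pow]
    have h1 : dist (v j) (w j) ^ 2 ≤
        ‖Complex.exp (Complex.I * (a j : ℂ) * (t : ℂ)) - 1‖ ^ 2 :=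
      pow_le_pow_left₀ dist_nonneg hb 2
    have h2 : μ ^ 2 ≤ ‖z j‖ ^ 2 := pow_le_pow_left₀ hμ0 (hμle j) 2
    exact mul_le_mul h1 h2 (by positivity) (by positivity)
  have hdio' := hdio t ht1
  have hchain : C * t ^ (1 - ν) * μ ≤ ε := by
    calc C * t ^ (1 - ν) * μ ≤ dist v w * μ := by
          apply mul_le_mul_of_nonneg_right _ hμ0
          exact le_trans hdio' hinf
      _ ≤ ‖linFlow m a t z - z‖ := hkey
      _ ≤ ε := hrec
  have hT0 : (0:ℝ) < T := lt_of_lt_of_le one_pos hT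
  have ht0 : (0:ℝ) < t := lt_of_lt_of_le one_pos ht1
  have hTt : T ^ (1 - ν) ≤ t ^ (1 - ν) :=
    Real.rpow_le_rpow_of_nonpos ht0 htT (by linarith)
  have hchain2 : C * T ^ (1 - ν) * μ ≤ ε := by
    have : C * T ^ (1 - ν) * μ ≤ C * t ^ (1 - ν) * μ := by
      apply mul_le_mul_of_nonneg_right _ hμ0
      exact mul_le_mul_of_nonneg_left hTt hC.le
    linarith
  have hpos : 0 < C * T ^ (1 - ν) := by positivity
  have hμbound : μ ≤ ε / (C * T ^ (1 - ν)) := by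
    rw [le_div_iff₀ hpos]
    linarith [hchain2]
  have hTrw : T ^ (ν - 1) = (T ^ (1 - ν))⁻¹ := by
    rw [← Real.rpow_neg hT0.le]
    ring_nf
  calc μ ≤ ε / (C * T ^ (1 - ν)) := hμbound
    _ = 1 / C * ε * T ^ (ν - 1) := by
        rw [hTrw]; field_simp
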